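/- arXiv:2411.17909 — 2 statements merged into one kernel-verified Lean document; each statement's English description precedes it below -/
import Mathlib

section
/- Let I ⊆ (0,1] be a set of real numbers containing 1. Let I₊ denote the union of {0} with the set of all finite sums of elements of I (with repetitions allowed), and let D(I) = { (m − 1 + f)/m : m a positive integer, f ∈ I₊ with f ≤ 1 }. Then I satisfies the descending chain condition if and only if D(I) satisfies the descending chain condition. -/
open Set Filter

/-- A set `S` of real numbers satisfies the descending chain condition (DCC) if every
non-increasing sequence of elements of `S` is eventually constant. -/
def IsDCCSet (S : Set ℝ) : Prop :=
  ∀ f : ℕ → ℝ, (∀ n, f n ∈ S) → Antitone f → ∃ N, ∀ n, N ≤ n → f n = f N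

/-- `I₊`: the union of `{0}` with the set of all finite sums of elements of `I`
(with repetitions allowed); sums of lists of elements of `I` (the empty list gives `0`). -/
def sumSet (I : Set ℝ) : Set ℝ :=
  {x : ℝ | ∃ l : List ℝ, (∀ a ∈ l, a ∈ I) ∧ l.sum = x}

/-- `D(I) = { (m − 1 + f)/m : m a positive integer, f ∈ I₊ with f ≤ 1 }`. -/
def DSet (I : Set ℝ) : Set ℝ :=
  {a : ℝ | ∃ m : ℕ, 0 < m ∧ ∃ f ∈ sumSet I, f ≤ 1 ∧ a = ((m : ℝ) - 1 + f) / (m : ℝ)}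

lemma isDCCSet_iff_isWF (S : Set ℝ) : IsDCCSet S ↔ S.IsWF := by
  constructor
  · intro h
    rw [Set.isWF_iff_no_descending_seq]
    intro f hf hmem
    obtain ⟨N, hN⟩ := h f (fun n => hmem n) hf.antitone
    exact absurd (hN (N + 1) (by omega)) (hf (by omega : N < N + 1)).ne
  · intro h f hmem hf
    have hsub : Set.range f ⊆ S := by rintro _ ⟨n, rfl⟩; exact hmem n
    have hWF : (Set.range f).IsWF := h.mono hsub
    have hne : (Set.range f).Nonempty := ⟨f 0, 0, rfl⟩
    obtain ⟨N, hN⟩ := hWF.min_mem hne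
    refine ⟨N, fun n hn => ?_⟩
    have h2 := hWF.not_lt_min hne (Set.mem_range_self n)
    rw [← hN] at h2
    exact le_antisymm (hf hn) (not_lt.1 h2)

lemma mul_length_le_sum {δ : ℝ} : ∀ l : List ℝ, (∀ a ∈ l, δ ≤ a) → δ * l.length ≤ l.sum := by
  intro l
  induction l with
  | nil => intro _; simp
  | cons a t ih =>
    intro hmem
    have h1 : δ ≤ a := hmem a (by simp)
    have h2 := ih (fun b hb => hmem b (by simp [hb]))
    simp only [List.length_cons, List.sum_cons]
    push_cast
    nlinarith

/-- No strictly decreasing sequence of sums of lists of a fixed length `r` with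
entries in a PWO set. -/
lemma no_strictAnti_sum (I : Set ℝ) (hPWO : I.IsPWO) :
    ∀ r : ℕ, ∀ x : ℕ → ℝ, ∀ l : ℕ → List ℝ,
      (∀ n, ∀ a ∈ l n, a ∈ I) → (∀ n, (l n).length = r) →
      (∀ n, (l n).sum = x n) → StrictAnti x → False := by
  intro r
  induction r with
  | zero =>
    intro x l _ hlen hsum hx
    have h0 : x 0 = 0 := by
      rw [← hsum 0, List.length_eq_zero_iff.mp (hlen 0), List.sum_nil]
    have h1 : x 1 = 0 := by
      rw [← hsum 1, List.length_eq_zero_iff.mp (hlen 1), List.sum_nil]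
    have := hx (by omega : (0 : ℕ) < 1)
    rw [h0, h1] at this
    exact lt_irrefl _ this
  | succ r ih =>
    intro x l hmem hlen hsum hx
    have hc : ∀ n, ∃ a t, l n = a :: t := by
      intro n
      exact List.exists_cons_of_ne_nil (by
        intro h
        have := hlen n
        rw [h] at this
        simp at this)
    choose hd tl hcons using hc
    have hhdI : ∀ n, hd n ∈ I := fun n => hmem n _ (by rw [hcons n]; exact List.mem_cons_self)
    obtain ⟨g, hg⟩ := hPWO.exists_monotone_subseq hhdI
    have hxsum : ∀ n, hd n + (tl n).sum = x n := by
      intro n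
      rw [← hsum n, hcons n, List.sum_cons]
    refine ih (fun n => (tl (g n)).sum) (fun n => tl (g n))
      (fun n a ha => hmem (g n) a (by rw [hcons (g n)]; exact List.mem_cons_of_mem _ ha))
      (fun n => by have := hlen (g n); rw [hcons (g n)] at this; simpa using this)
      (fun n => rfl) ?_
    intro a b hab
    have h1 : x (g b) < x (g a) := hx (g.strictMono hab)
    have h2 : hd (g a) ≤ hd (g b) := hg hab.le
    have h3 := hxsum (g a)
    have h4 := hxsum (g b)
    linarith

lemma isWF_sumSet_le_one (I : Set ℝ) (hI : I ⊆ Set.Ioc (0 : ℝ) 1) (h1 : (1 : ℝ) ∈ I)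
    (hWF : I.IsWF) : {x : ℝ | x ∈ sumSet I ∧ x ≤ 1}.IsWF := by
  rw [Set.isWF_iff_no_descending_seq]
  intro x hx hmem
  have hne : I.Nonempty := ⟨1, h1⟩
  set δ := hWF.min hne with hδdef
  have hδI : δ ∈ I := hWF.min_mem hne
  have hδ0 : 0 < δ := (hI hδI).1
  have hδle : ∀ a ∈ I, δ ≤ a := fun a ha => not_lt.1 (hWF.not_lt_min hne ha)
  choose l hlI hlsum using fun n => (hmem n).1
  set N := Nat.floor (1 / δ) with hNdef
  have hlen : ∀ n, (l n).length ≤ N := by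
    intro n
    apply Nat.le_floor
    have h2 : δ * (l n).length ≤ (l n).sum := mul_length_le_sum _ (fun a ha => hδle a (hlI n a ha))
    have h3 : (l n).sum ≤ 1 := by rw [hlsum n]; exact (hmem n).2
    rw [le_div_iff₀ hδ0]
    nlinarith
  have hfreq : ∃ r, ∃ᶠ n in atTop, (l n).length = r := by
    by_contra hcon
    push_neg at hcon
    have hev : ∀ᶠ n in atTop, ∀ r ∈ Finset.range (N + 1), (l n).length ≠ r :=
      (Filter.eventually_all_finset _).2 fun r _ => hcon r
    obtain ⟨n, hn⟩ := hev.exists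
    exact hn (l n).length (Finset.mem_range.2 (by have := hlen n; omega)) rfl
  obtain ⟨r, hr⟩ := hfreq
  obtain ⟨φ, hφmono, hφ⟩ := Filter.extraction_of_frequently_atTop hr
  exact no_strictAnti_sum I hWF.isPWO r (x ∘ φ) (fun n => l (φ n))
    (fun n => hlI (φ n)) (fun n => hφ n) (fun n => hlsum (φ n)) (hx.comp_strictMono hφmono)

lemma isWF_DSet (I : Set ℝ) (hI : I ⊆ Set.Ioc (0 : ℝ) 1) (h1 : (1 : ℝ) ∈ I)
    (hWF : I.IsWF) : (DSet I).IsWF := by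
  rw [Set.isWF_iff_no_descending_seq]
  intro x hx hmem
  have hmem' : ∀ n : ℕ, ∃ m : ℕ, 0 < m ∧ ∃ f, f ∈ sumSet I ∧ f ≤ 1 ∧
      x n = ((m : ℝ) - 1 + f) / (m : ℝ) := fun n => hmem n
  choose m hm f hfmem hfle hxeq using hmem'
  have hf0 : ∀ n, 0 ≤ f n := by
    intro n
    obtain ⟨ln, hln, hlsum⟩ := hfmem n
    rw [← hlsum]
    exact List.sum_nonneg (fun a ha => (hI (hln a ha)).1.le)
  have hmR : ∀ n, (1 : ℝ) ≤ (m n : ℝ) := by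
    intro n
    exact_mod_cast hm n
  have hxle1 : ∀ n, x n ≤ 1 := by
    intro n
    rw [hxeq n]
    rw [div_le_one (by linarith [hmR n])]
    linarith [hfle n]
  have hx1lt1 : x 1 < 1 := lt_of_lt_of_le (hx (by omega : (0:ℕ) < 1)) (hxle1 0)
  set M := Nat.floor (1 / (1 - x 1)) with hMdef
  have hmbound : ∀ n : ℕ, m (n + 1) ≤ M := by
    intro n
    apply Nat.le_floor
    have hxle : x (n + 1) ≤ x 1 := hx.antitone (by omega)
    have hmpos : (1 : ℝ) ≤ (m (n + 1) : ℝ) := hmR (n + 1)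
    have hge : 1 - 1 / (m (n + 1) : ℝ) ≤ x (n + 1) := by
      rw [hxeq (n + 1)]
      rw [le_div_iff₀ (by linarith)]
      have := hf0 (n + 1)
      field_simp
      nlinarith
    rw [le_div_iff₀ (by linarith)]
    have h1m : 0 < (m (n + 1) : ℝ) := by linarith
    have : 1 - x 1 ≤ 1 / (m (n + 1) : ℝ) := by linarith
    rw [le_div_iff₀ h1m] at this
    linarith
  have hfreq : ∃ r, ∃ᶠ n in atTop, m (n + 1) = r := by
    by_contra hcon
    push_neg at hcon
    have hev : ∀ᶠ n in atTop, ∀ r ∈ Finset.range (M + 1), m (n + 1) ≠ r :=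
      (Filter.eventually_all_finset _).2 fun r _ => hcon r
    obtain ⟨n, hn⟩ := hev.exists
    exact hn (m (n + 1)) (Finset.mem_range.2 (by have := hmbound n; omega)) rfl
  obtain ⟨r, hr⟩ := hfreq
  obtain ⟨φ, hφmono, hφ⟩ := Filter.extraction_of_frequently_atTop hr
  have hr0 : 0 < r := by rw [← hφ 0]; exact hm _
  have hrR : (1 : ℝ) ≤ (r : ℝ) := by exact_mod_cast hr0
  -- The sequence f (φ n + 1) is strictly decreasing in the WF set sumSet ∩ ≤1
  have hT := isWF_sumSet_le_one I hI h1 hWF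
  rw [Set.isWF_iff_no_descending_seq] at hT
  refine hT (fun n => f (φ n + 1)) ?_ (fun n => ⟨hfmem _, hfle _⟩)
  intro a b hab
  have hxab : x (φ b + 1) < x (φ a + 1) := hx (by have := hφmono hab; omega)
  have hea := hxeq (φ a + 1)
  have heb := hxeq (φ b + 1)
  rw [hφ a] at hea
  rw [hφ b] at heb
  have hfa : f (φ a + 1) = (r : ℝ) * x (φ a + 1) - (r : ℝ) + 1 := by
    field_simp at hea
    linarith
  have hfb : f (φ b + 1) = (r : ℝ) * x (φ b + 1) - (r : ℝ) + 1 := by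
    field_simp at heb
    linarith
  show f (φ b + 1) < f (φ a + 1)
  rw [hfa, hfb]
  nlinarith

theorem dcc_iff_dcc_DSet (I : Set ℝ) (hI : I ⊆ Set.Ioc (0 : ℝ) 1) (h1 : (1 : ℝ) ∈ I) :
    IsDCCSet I ↔ IsDCCSet (DSet I) := by
  rw [isDCCSet_iff_isWF, isDCCSet_iff_isWF]
  constructor
  · intro h
    exact isWF_DSet I hI h1 h
  · intro h
    apply h.mono
    intro a ha
    refine ⟨1, one_pos, a, ⟨[a], ?_, by simp⟩, (hI ha).2, by norm_num⟩
    intro b hb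
    rw [List.mem_singleton] at hb
    rw [hb]; exact ha
end

section
/- Let R be a discrete valuation ring with fraction field K, let π be a uniformizer of R, and let N be a positive integer. Then the polynomial X^N − π is irreducible over K, L := K[X]/(X^N − π) is a field extension of K of degree N, and the ring R' := R[X]/(X^N − π) is a discrete valuation ring whose maximal ideal is generated by the image t of X and whose residue field equals the residue field of R; moreover R' is the integral closure of R in L. -/
open Polynomial

theorem aux_root_pow_gen (S : Type*) [CommRing S] (c : S) (n : ℕ) :
    (AdjoinRoot.root (X ^ n - C c : S[X])) ^ n = algebraMap S _ c := by
  have h := AdjoinRoot.mk_self (f := (X ^ n - C c : S[X]))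
  rw [map_sub, map_pow, sub_eq_zero, AdjoinRoot.mk_X] at h
  exact h.trans rfl

section
variable (R : Type*) [CommRing R] [IsDomain R] [IsDiscreteValuationRing R]
    (π : R) (hπ : IsLocalRing.maximalIdeal R = Ideal.span {π})
    (N : ℕ) (hN : 0 < N)
include hπ hN

theorem aux_pi_ne_zero : π ≠ 0 := by
  intro h
  exact IsDiscreteValuationRing.not_a_field R (by rw [hπ, h, Ideal.span_singleton_eq_bot])

theorem aux_irred_R : Irreducible (X ^ N - C π : R[X]) := by
  have hmon : (X ^ N - C π : R[X]).Monic := monic_X_pow_sub_C π hN.ne'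
  have hdeg : (X ^ N - C π : R[X]).natDegree = N := by
    simpa using natDegree_X_pow_sub_C (n := N) (r := π)
  have hmem : π ∈ IsLocalRing.maximalIdeal R := by
    rw [hπ]; exact Ideal.mem_span_singleton_self π
  have hE : (X ^ N - C π : R[X]).IsEisensteinAt (IsLocalRing.maximalIdeal R) := by
    refine ⟨?_, ?_, ?_⟩
    · rw [hmon.leadingCoeff]
      exact fun h => (IsLocalRing.maximalIdeal.isMaximal R).ne_top (Ideal.eq_top_of_isUnit_mem _ h isUnit_one)
    · intro n hn
      rw [hdeg] at hn
      rw [coeff_sub, coeff_X_pow, if_neg hn.ne, coeff_C]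
      split <;> simp [hmem]
    · rw [coeff_sub, coeff_X_pow, if_neg hN.ne, coeff_C_zero, zero_sub, hπ,
        Ideal.span_singleton_pow, Ideal.mem_span_singleton]
      rintro ⟨c, hc⟩
      have : π * (1 + π * c) = 0 := by linear_combination -hc
      rcases mul_eq_zero.mp this with h | h
      · exact aux_pi_ne_zero R π hπ N hN h
      · have hu : IsUnit π := IsUnit.of_mul_eq_one (-c) (by linear_combination -h)
        exact (IsLocalRing.maximalIdeal.isMaximal R).ne_top (Ideal.eq_top_of_isUnit_mem _ hmem hu)
  exact hE.irreducible (IsLocalRing.maximalIdeal.isMaximal R).isPrime hmon.isPrimitive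
    (by rw [hdeg]; exact hN)

theorem aux_map_g :
    ((X ^ N - C π : R[X]).map (algebraMap R (FractionRing R))) =
      (X ^ N - C (algebraMap R (FractionRing R) π)) := by
  simp

theorem aux_irred_K :
    Irreducible (X ^ N - C (algebraMap R (FractionRing R) π) : (FractionRing R)[X]) := by
  rw [← aux_map_g R π hπ N hN]
  exact ((monic_X_pow_sub_C π hN.ne').irreducible_iff_irreducible_map_fraction_map).mp
    (aux_irred_R R π hπ N hN)

theorem aux_isField :
    IsField (AdjoinRoot (X ^ N - C (algebraMap R (FractionRing R) π) : (FractionRing R)[X])) := by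
  letI : Fact (Irreducible (X ^ N - C (algebraMap R (FractionRing R) π) : (FractionRing R)[X])) :=
    ⟨aux_irred_K R π hπ N hN⟩
  exact Field.toIsField _

theorem aux_finrank :
    Module.finrank (FractionRing R)
      (AdjoinRoot (X ^ N - C (algebraMap R (FractionRing R) π) : (FractionRing R)[X])) = N := by
  have h0 : (X ^ N - C (algebraMap R (FractionRing R) π) : (FractionRing R)[X]) ≠ 0 :=
    (monic_X_pow_sub_C _ hN.ne').ne_zero
  rw [(AdjoinRoot.powerBasis h0).finrank, AdjoinRoot.powerBasis_dim]
  simpa using natDegree_X_pow_sub_C (n := N) (r := (algebraMap R (FractionRing R) π))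

theorem aux_prime_g : Prime (X ^ N - C π : R[X]) :=
  UniqueFactorizationMonoid.irreducible_iff_prime.mp (aux_irred_R R π hπ N hN)

theorem aux_domain : IsDomain (AdjoinRoot (X ^ N - C π : R[X])) :=
  (Ideal.Quotient.isDomain_iff_prime _).mpr
    ((Ideal.span_singleton_prime (aux_prime_g R π hπ N hN).ne_zero).mpr (aux_prime_g R π hπ N hN))

theorem aux_eval2 : Polynomial.eval₂ (IsLocalRing.residue R) 0 (X ^ N - C π : R[X]) = 0 := by
  rw [eval₂_at_zero, coeff_sub, coeff_X_pow, if_neg hN.ne, coeff_C_zero, zero_sub, map_neg,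
    neg_eq_zero]
  exact Ideal.Quotient.eq_zero_iff_mem.mpr (hπ ▸ Ideal.mem_span_singleton_self π)

/-- the reduction map to the residue field of `R` -/
noncomputable def auxPsi : AdjoinRoot (X ^ N - C π : R[X]) →+* IsLocalRing.ResidueField R :=
  AdjoinRoot.lift (IsLocalRing.residue R) 0 (aux_eval2 R π hπ N hN)

theorem aux_psi_surj : Function.Surjective (auxPsi R π hπ N hN) := fun y => by
  obtain ⟨r, rfl⟩ := Ideal.Quotient.mk_surjective y
  exact ⟨AdjoinRoot.of _ r, AdjoinRoot.lift_of _⟩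

theorem aux_root_pow :
    (AdjoinRoot.root (X ^ N - C π : R[X])) ^ N = algebraMap R _ π := by
  have h := AdjoinRoot.mk_self (f := (X ^ N - C π : R[X]))
  rw [map_sub, map_pow, sub_eq_zero, AdjoinRoot.mk_X] at h
  exact h.trans rfl

theorem aux_ker_psi :
    RingHom.ker (auxPsi R π hπ N hN) = Ideal.span {AdjoinRoot.root (X ^ N - C π : R[X])} := by
  refine le_antisymm ?_ ?_
  · intro x hx
    obtain ⟨p, rfl⟩ := AdjoinRoot.mk_surjective x
    have hx' : IsLocalRing.residue R (p.coeff 0) = 0 := by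
      rw [RingHom.mem_ker, auxPsi, AdjoinRoot.lift_mk, eval₂_at_zero] at hx
      exact hx
    have hx'' : p.coeff 0 ∈ IsLocalRing.maximalIdeal R :=
      Ideal.Quotient.eq_zero_iff_mem.mp hx'
    rw [hπ, Ideal.mem_span_singleton] at hx''
    obtain ⟨c, hc⟩ := hx''
    have hp : p = X * p.divX + C (π * c) := by rw [← hc, X_mul_divX_add]
    rw [hp, map_add, map_mul, AdjoinRoot.mk_X]
    refine Ideal.add_mem _ (Ideal.mul_mem_right _ _ (Ideal.subset_span rfl)) ?_
    have hCπ : AdjoinRoot.mk (X ^ N - C π : R[X]) (C (π * c)) =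
        AdjoinRoot.root (X ^ N - C π : R[X]) ^ N * AdjoinRoot.mk _ (C c) := by
      rw [C_mul, map_mul]
      congr 1
      exact (aux_root_pow R π hπ N hN).symm.trans rfl
    rw [hCπ]
    exact Ideal.mul_mem_right _ _
      (Ideal.mem_span_singleton.mpr (dvd_pow_self _ hN.ne'))
  · rw [Ideal.span_le, Set.singleton_subset_iff, SetLike.mem_coe, RingHom.mem_ker]
    exact AdjoinRoot.lift_root _

theorem aux_span_root_maximal :
    (Ideal.span {AdjoinRoot.root (X ^ N - C π : R[X])}).IsMaximal := by
  rw [← aux_ker_psi R π hπ N hN]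
  exact RingHom.ker_isMaximal_of_surjective _ (aux_psi_surj R π hπ N hN)

theorem aux_integral : Algebra.IsIntegral R (AdjoinRoot (X ^ N - C π : R[X])) := by
  have := (AdjoinRoot.powerBasis' (monic_X_pow_sub_C π hN.ne')).finite
  exact Algebra.IsIntegral.of_finite _ _

theorem aux_unique_max (I : Ideal (AdjoinRoot (X ^ N - C π : R[X]))) (hI : I.IsMaximal) :
    I = Ideal.span {AdjoinRoot.root (X ^ N - C π : R[X])} := by
  have hdom := aux_domain R π hπ N hN
  have hint := aux_integral R π hπ N hN
  have hcomap : (I.comap (algebraMap R (AdjoinRoot (X ^ N - C π : R[X])))).IsMaximal :=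
    Ideal.isMaximal_comap_of_isIntegral_of_isMaximal I
  have hπI : algebraMap R (AdjoinRoot (X ^ N - C π : R[X])) π ∈ I := by
    have : I.comap (algebraMap R (AdjoinRoot (X ^ N - C π : R[X]))) = IsLocalRing.maximalIdeal R :=
      IsLocalRing.eq_maximalIdeal hcomap
    have : π ∈ I.comap (algebraMap R (AdjoinRoot (X ^ N - C π : R[X]))) := by
      rw [this, hπ]; exact Ideal.mem_span_singleton_self π
    exact this
  have hroot : AdjoinRoot.root (X ^ N - C π : R[X]) ∈ I := by
    refine hI.isPrime.mem_of_pow_mem N ?_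
    rw [aux_root_pow R π hπ N hN]
    exact hπI
  exact ((aux_span_root_maximal R π hπ N hN).eq_of_le hI.ne_top
    (Ideal.span_le.mpr (Set.singleton_subset_iff.mpr hroot))).symm

theorem aux_local : IsLocalRing (AdjoinRoot (X ^ N - C π : R[X])) :=
  IsLocalRing.of_unique_max_ideal
    ⟨Ideal.span {AdjoinRoot.root (X ^ N - C π : R[X])}, aux_span_root_maximal R π hπ N hN,
      fun I hI => aux_unique_max R π hπ N hN I hI⟩

theorem aux_maximalIdeal :
    @IsLocalRing.maximalIdeal _ _ (aux_local R π hπ N hN) =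
      Ideal.span {AdjoinRoot.root (X ^ N - C π : R[X])} := by
  letI := aux_local R π hπ N hN
  exact aux_unique_max R π hπ N hN _ (IsLocalRing.maximalIdeal.isMaximal _)

theorem aux_root_ne_zero : AdjoinRoot.root (X ^ N - C π : R[X]) ≠ 0 := by
  have hdom := aux_domain R π hπ N hN
  intro h
  have h2 : algebraMap R (AdjoinRoot (X ^ N - C π : R[X])) π = 0 := by
    rw [← aux_root_pow R π hπ N hN, h, zero_pow hN.ne']
  have h3 : AdjoinRoot.mk (X ^ N - C π : R[X]) (C π) = 0 := by
    rw [show AdjoinRoot.mk (X ^ N - C π : R[X]) (C π) =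
      algebraMap R (AdjoinRoot (X ^ N - C π : R[X])) π from rfl, h2]
  rw [AdjoinRoot.mk_eq_zero] at h3
  have hπ0 : (C π : R[X]) ≠ 0 := by
    simpa using aux_pi_ne_zero R π hπ N hN
  have := Polynomial.natDegree_le_of_dvd h3 hπ0
  rw [natDegree_C] at this
  have hdeg : (X ^ N - C π : R[X]).natDegree = N := by
    simpa using natDegree_X_pow_sub_C (n := N) (r := π)
  omega

theorem aux_dvr : @IsDiscreteValuationRing (AdjoinRoot (X ^ N - C π : R[X])) _
    (aux_domain R π hπ N hN) := by
  letI := aux_domain R π hπ N hN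
  letI := aux_local R π hπ N hN
  have hnf : ¬ IsField (AdjoinRoot (X ^ N - C π : R[X])) := by
    intro hf
    have := IsLocalRing.isField_iff_maximalIdeal_eq.mp hf
    rw [aux_maximalIdeal R π hπ N hN, Ideal.span_singleton_eq_bot] at this
    exact aux_root_ne_zero R π hπ N hN this
  refine ((IsDiscreteValuationRing.TFAE (AdjoinRoot (X ^ N - C π : R[X])) hnf).out 0 4).mpr ?_
  rw [aux_maximalIdeal R π hπ N hN]
  exact ⟨_, rfl⟩


theorem aux_residue_surj :
    Function.Surjective
      ((@IsLocalRing.residue (AdjoinRoot (X ^ N - C π : R[X])) _ (aux_local R π hπ N hN)).comp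
        (algebraMap R (AdjoinRoot (X ^ N - C π : R[X])))) := by
  letI := aux_local R π hπ N hN
  intro y
  obtain ⟨x, rfl⟩ := Ideal.Quotient.mk_surjective y
  obtain ⟨p, rfl⟩ := AdjoinRoot.mk_surjective x
  refine ⟨p.coeff 0, ?_⟩
  show IsLocalRing.residue _ (algebraMap R _ (p.coeff 0)) = IsLocalRing.residue _ (AdjoinRoot.mk _ p)
  refine Ideal.Quotient.eq.mpr ?_
  rw [aux_maximalIdeal R π hπ N hN]
  have hp : C (p.coeff 0) - p = -(X * p.divX) := by
    linear_combination X_mul_divX_add p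
  have he : algebraMap R (AdjoinRoot (X ^ N - C π : R[X])) (p.coeff 0) - AdjoinRoot.mk _ p
      = -(AdjoinRoot.root (X ^ N - C π : R[X]) * AdjoinRoot.mk _ p.divX) := by
    rw [show algebraMap R (AdjoinRoot (X ^ N - C π : R[X])) (p.coeff 0)
      = AdjoinRoot.mk _ (C (p.coeff 0)) from rfl, ← map_sub, hp, map_neg, map_mul,
      AdjoinRoot.mk_X]
  rw [he]
  exact neg_mem (Ideal.mul_mem_right _ _ (Ideal.subset_span rfl))

theorem aux_residue_ker (r : R) :
    (@IsLocalRing.residue (AdjoinRoot (X ^ N - C π : R[X])) _ (aux_local R π hπ N hN)).comp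
        (algebraMap R (AdjoinRoot (X ^ N - C π : R[X]))) r = 0 ↔
      r ∈ IsLocalRing.maximalIdeal R := by
  letI := aux_local R π hπ N hN
  show IsLocalRing.residue _ (algebraMap R _ r) = 0 ↔ _
  have h1 : (IsLocalRing.residue _) (algebraMap R (AdjoinRoot (X ^ N - C π : R[X])) r) = 0 ↔
      algebraMap R (AdjoinRoot (X ^ N - C π : R[X])) r ∈
        IsLocalRing.maximalIdeal (AdjoinRoot (X ^ N - C π : R[X])) :=
    Ideal.Quotient.eq_zero_iff_mem
  rw [h1, aux_maximalIdeal R π hπ N hN,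
    ← aux_ker_psi R π hπ N hN, RingHom.mem_ker,
    show (algebraMap R (AdjoinRoot (X ^ N - C π : R[X])) r) = AdjoinRoot.of _ r from rfl,
    auxPsi, AdjoinRoot.lift_of]
  exact Ideal.Quotient.eq_zero_iff_mem

theorem aux_aeval :
    Polynomial.aeval
      (AdjoinRoot.root (X ^ N - C (algebraMap R (FractionRing R) π) : (FractionRing R)[X]))
      (X ^ N - C π : R[X]) = 0 := by
  rw [map_sub, map_pow, aeval_X, aeval_C,
    aux_root_pow_gen (FractionRing R) (algebraMap R (FractionRing R) π) N,
    IsScalarTower.algebraMap_apply R (FractionRing R)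
      (AdjoinRoot (X ^ N - C (algebraMap R (FractionRing R) π) : (FractionRing R)[X]))]
  exact sub_self _

/-- the canonical map from `R[X]/(X^N - π)` to `K[X]/(X^N - π)`. -/
noncomputable def auxF : AdjoinRoot (X ^ N - C π : R[X]) →ₐ[R]
    AdjoinRoot (X ^ N - C (algebraMap R (FractionRing R) π) : (FractionRing R)[X]) :=
  AdjoinRoot.liftAlgHom _ (Algebra.ofId _ _) _
    (by rw [Algebra.toRingHom_ofId, ← Polynomial.aeval_def]; exact aux_aeval R π hπ N hN)

theorem aux_f_root :
    auxF R π hπ N hN (AdjoinRoot.root (X ^ N - C π : R[X])) =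
      AdjoinRoot.root (X ^ N - C (algebraMap R (FractionRing R) π) : (FractionRing R)[X]) := by
  show AdjoinRoot.liftAlgHom (X ^ N - C π : R[X]) (Algebra.ofId _ _)
      (AdjoinRoot.root (X ^ N - C (algebraMap R (FractionRing R) π) : (FractionRing R)[X]))
      (aux_aeval R π hπ N hN) (AdjoinRoot.root (X ^ N - C π : R[X])) = _
  exact AdjoinRoot.liftAlgHom_root _ _ _ (aux_aeval R π hπ N hN)

theorem aux_rootL_ne_zero :
    AdjoinRoot.root (X ^ N - C (algebraMap R (FractionRing R) π) : (FractionRing R)[X]) ≠ 0 := by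
  letI : Fact (Irreducible
      (X ^ N - C (algebraMap R (FractionRing R) π) : (FractionRing R)[X])) :=
    ⟨aux_irred_K R π hπ N hN⟩
  intro h0
  have h := aux_root_pow_gen (FractionRing R) (algebraMap R (FractionRing R) π) N
  rw [h0, zero_pow hN.ne'] at h
  have hc : algebraMap R (FractionRing R) π ≠ 0 := fun hc =>
    aux_pi_ne_zero R π hπ N hN
      ((map_eq_zero_iff (algebraMap R (FractionRing R))
        (IsFractionRing.injective R (FractionRing R))).mp hc)
  exact hc ((map_eq_zero_iff (algebraMap (FractionRing R)
    (AdjoinRoot (X ^ N - C (algebraMap R (FractionRing R) π) : (FractionRing R)[X])))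
    (RingHom.injective _)).mp h.symm)

theorem aux_f_inj : Function.Injective (auxF R π hπ N hN) := by
  letI := aux_domain R π hπ N hN
  letI := aux_local R π hπ N hN
  letI := aux_dvr R π hπ N hN
  letI : Fact (Irreducible
      (X ^ N - C (algebraMap R (FractionRing R) π) : (FractionRing R)[X])) :=
    ⟨aux_irred_K R π hπ N hN⟩
  have hrootirr : Irreducible (AdjoinRoot.root (X ^ N - C π : R[X])) :=
    IsDiscreteValuationRing.irreducible_of_span_eq_maximalIdeal _
      (aux_root_ne_zero R π hπ N hN) (aux_maximalIdeal R π hπ N hN)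
  rw [injective_iff_map_eq_zero]
  intro a ha
  by_contra hne
  obtain ⟨n, u, rfl⟩ := IsDiscreteValuationRing.eq_unit_mul_pow_irreducible hne hrootirr
  rw [map_mul, map_pow, aux_f_root R π hπ N hN] at ha
  rcases mul_eq_zero.mp ha with h | h
  · exact ((u.isUnit.map (auxF R π hπ N hN)).ne_zero) h
  · exact pow_ne_zero n (aux_rootL_ne_zero R π hπ N hN) h

theorem aux_denom
    (z : AdjoinRoot (X ^ N - C (algebraMap R (FractionRing R) π) : (FractionRing R)[X])) :
    ∃ b : R, b ≠ 0 ∧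
      z * algebraMap R
        (AdjoinRoot (X ^ N - C (algebraMap R (FractionRing R) π) : (FractionRing R)[X])) b ∈
        (auxF R π hπ N hN).range := by
  obtain ⟨q, rfl⟩ := AdjoinRoot.mk_surjective z
  obtain ⟨b, hb⟩ := IsLocalization.integerNormalization_map_to_map (nonZeroDivisors R) q
  refine ⟨b, nonZeroDivisors.ne_zero b.2,
    ⟨AdjoinRoot.mk _ (IsLocalization.integerNormalization (nonZeroDivisors R) q), ?_⟩⟩
  show auxF R π hπ N hN
      (AdjoinRoot.mk _ (IsLocalization.integerNormalization (nonZeroDivisors R) q)) = _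
  rw [auxF, AdjoinRoot.liftAlgHom_mk, Algebra.toRingHom_ofId, ← Polynomial.aeval_def]
  rw [Polynomial.aeval_def, IsScalarTower.algebraMap_eq R (FractionRing R)
    (AdjoinRoot (X ^ N - C (algebraMap R (FractionRing R) π) : (FractionRing R)[X])),
    ← Polynomial.eval₂_map, hb]
  have hsm : ((b : R) • q) = C (algebraMap R (FractionRing R) b) * q := by
    rw [Algebra.smul_def, IsScalarTower.algebraMap_apply R (FractionRing R)
      ((FractionRing R)[X])]
    rfl
  rw [hsm, eval₂_mul, eval₂_C, ← AdjoinRoot.aeval_eq, Polynomial.aeval_def, RingHom.comp_apply]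
  ring

theorem aux_fracring :
    IsFractionRing (auxF R π hπ N hN).range
      (AdjoinRoot (X ^ N - C (algebraMap R (FractionRing R) π) : (FractionRing R)[X])) := by
  letI : Fact (Irreducible
      (X ^ N - C (algebraMap R (FractionRing R) π) : (FractionRing R)[X])) :=
    ⟨aux_irred_K R π hπ N hN⟩
  set L := AdjoinRoot (X ^ N - C (algebraMap R (FractionRing R) π) : (FractionRing R)[X])
  set S := (auxF R π hπ N hN).range
  have hinj : Function.Injective (algebraMap R L) := by
    rw [IsScalarTower.algebraMap_eq R (FractionRing R) L]
    exact (RingHom.injective (algebraMap (FractionRing R) L)).comp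
      (IsFractionRing.injective R (FractionRing R))
  refine (isLocalization_iff _ _).mpr ⟨?_, ?_, ?_⟩
  · rintro ⟨y, hy⟩
    have hyne : (y : L) ≠ 0 := by
      intro h0
      have : y = 0 := Subtype.ext h0
      subst this
      exact zero_notMem_nonZeroDivisors hy
    exact isUnit_iff_ne_zero.mpr (by simpa using hyne)
  · intro z
    obtain ⟨b, hb0, hb⟩ := aux_denom R π hπ N hN z
    have hbS : algebraMap R L b ∈ S := S.algebraMap_mem b
    refine ⟨⟨⟨_, hb⟩, ⟨⟨_, hbS⟩, ?_⟩⟩, ?_⟩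
    · refine mem_nonZeroDivisors_of_ne_zero ?_
      intro h0
      exact hb0 (hinj (by simpa using congrArg Subtype.val h0))
    · rfl
  · intro x y h
    exact ⟨1, by rw [Subtype.ext (show (x : L) = y from h)]⟩

theorem aux_range :
    (auxF R π hπ N hN).range =
      integralClosure R
        (AdjoinRoot (X ^ N - C (algebraMap R (FractionRing R) π) : (FractionRing R)[X])) := by
  letI : Fact (Irreducible
      (X ^ N - C (algebraMap R (FractionRing R) π) : (FractionRing R)[X])) :=
    ⟨aux_irred_K R π hπ N hN⟩
  set L := AdjoinRoot (X ^ N - C (algebraMap R (FractionRing R) π) : (FractionRing R)[X])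
  refine le_antisymm ?_ ?_
  · rw [← Algebra.map_top, ← AdjoinRoot.adjoinRoot_eq_top, AlgHom.map_adjoin,
      Set.image_singleton, aux_f_root R π hπ N hN]
    refine Algebra.adjoin_le ?_
    rintro x hx
    rw [Set.mem_singleton_iff] at hx
    subst hx
    exact ⟨(X ^ N - C π : R[X]), monic_X_pow_sub_C π hN.ne',
      by rw [← Polynomial.aeval_def]; exact aux_aeval R π hπ N hN⟩
  · intro x hx
    letI := aux_domain R π hπ N hN
    letI := aux_local R π hπ N hN
    letI := aux_dvr R π hπ N hN
    letI : IsPrincipalIdealRing (auxF R π hπ N hN).range :=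
      IsPrincipalIdealRing.of_surjective (auxF R π hπ N hN).rangeRestrict.toRingHom
        (AlgHom.rangeRestrict_surjective _)
    letI := aux_fracring R π hπ N hN
    have hx' : IsIntegral (auxF R π hπ N hN).range x :=
      IsIntegral.tower_top (A := (auxF R π hπ N hN).range) hx
    obtain ⟨y, hy⟩ := IsIntegrallyClosed.isIntegral_iff.mp hx'
    rw [← hy]
    exact y.2

end



/-- Let `R` be a discrete valuation ring with fraction field `K`, `π` a uniformizer of `R`,
and `N` a positive integer. Then `X^N − π` is irreducible over `K`, `L := K[X]/(X^N − π)` is a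
field extension of `K` of degree `N`, and `R' := R[X]/(X^N − π)` is a discrete valuation ring
whose maximal ideal is generated by the image `t` of `X` and whose residue field equals the
residue field of `R`; moreover `R'` is the integral closure of `R` in `L`. -/
theorem adjoinRoot_of_uniformizer_is_dvr
    (R : Type*) [CommRing R] [IsDomain R] [IsDiscreteValuationRing R]
    (π : R) (hπ : IsLocalRing.maximalIdeal R = Ideal.span {π})
    (N : ℕ) (hN : 0 < N) :
    Irreducible
      (Polynomial.X ^ N - Polynomial.C (algebraMap R (FractionRing R) π) :
        Polynomial (FractionRing R)) ∧
    IsField (AdjoinRoot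
      (Polynomial.X ^ N - Polynomial.C (algebraMap R (FractionRing R) π))) ∧
    Module.finrank (FractionRing R)
      (AdjoinRoot (Polynomial.X ^ N - Polynomial.C (algebraMap R (FractionRing R) π))) = N ∧
    ∃ (hdom : IsDomain (AdjoinRoot (Polynomial.X ^ N - Polynomial.C π)))
      (hloc : IsLocalRing (AdjoinRoot (Polynomial.X ^ N - Polynomial.C π))),
      (@IsDiscreteValuationRing (AdjoinRoot (Polynomial.X ^ N - Polynomial.C π)) _ hdom) ∧
      (@IsLocalRing.maximalIdeal (AdjoinRoot (Polynomial.X ^ N - Polynomial.C π)) _ hloc =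
        Ideal.span {AdjoinRoot.root (Polynomial.X ^ N - Polynomial.C π)}) ∧
      Function.Surjective
        ((@IsLocalRing.residue (AdjoinRoot (Polynomial.X ^ N - Polynomial.C π)) _ hloc).comp
          (algebraMap R (AdjoinRoot (Polynomial.X ^ N - Polynomial.C π)))) ∧
      (∀ r : R,
        (@IsLocalRing.residue (AdjoinRoot (Polynomial.X ^ N - Polynomial.C π)) _ hloc).comp
            (algebraMap R (AdjoinRoot (Polynomial.X ^ N - Polynomial.C π))) r = 0 ↔
          r ∈ IsLocalRing.maximalIdeal R) ∧
      ∃ f : AdjoinRoot (Polynomial.X ^ N - Polynomial.C π) →+*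
          AdjoinRoot
            (Polynomial.X ^ N - Polynomial.C (algebraMap R (FractionRing R) π) :
              Polynomial (FractionRing R)),
        f (AdjoinRoot.root (Polynomial.X ^ N - Polynomial.C π)) =
          AdjoinRoot.root
            (Polynomial.X ^ N - Polynomial.C (algebraMap R (FractionRing R) π)) ∧
        (∀ r : R,
          f (algebraMap R (AdjoinRoot (Polynomial.X ^ N - Polynomial.C π)) r) =
            algebraMap R
              (AdjoinRoot
                (Polynomial.X ^ N - Polynomial.C (algebraMap R (FractionRing R) π) :
                  Polynomial (FractionRing R))) r) ∧
        f.range =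
          (integralClosure R
            (AdjoinRoot
              (Polynomial.X ^ N - Polynomial.C (algebraMap R (FractionRing R) π) :
                Polynomial (FractionRing R)))).toSubring := by
  refine ⟨aux_irred_K R π hπ N hN, aux_isField R π hπ N hN, aux_finrank R π hπ N hN,
    aux_domain R π hπ N hN, aux_local R π hπ N hN, aux_dvr R π hπ N hN,
    aux_maximalIdeal R π hπ N hN, aux_residue_surj R π hπ N hN,
    fun r => aux_residue_ker R π hπ N hN r,
    (auxF R π hπ N hN).toRingHom, aux_f_root R π hπ N hN,
    fun r => (auxF R π hπ N hN).commutes r, ?_⟩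
  have h1 : (auxF R π hπ N hN).toRingHom.range = ((auxF R π hπ N hN).range).toSubring := by
    rfl
  exact h1.trans (congrArg Subalgebra.toSubring (aux_range R π hπ N hN))
end
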